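/- Let k be a positive integer and let G be a connected graph on a finite vertex set which is not Hamiltonian and which is a k-expander. Then the number of non-edges of G that are boosters is at least (k+1)^2/2. -/

import Mathlib

open SimpleGraph

/-- The external neighborhood of a vertex subset `U` in a graph `G`:
the set of vertices outside `U` having a neighbor in `U`. -/
def extNbhd {V : Type*} [Fintype V] [DecidableEq V] (G : SimpleGraph V)
    [DecidableRel G.Adj] (U : Finset V) : Finset V :=
  Finset.univ.filter (fun v => v ∉ U ∧ ∃ u ∈ U, G.Adj u v)

/-- A graph is a `k`-expander if every set `U` of at most `k` vertices satisfies
`|N_G(U)| ≥ 2|U|`. -/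
def IsKExpander {V : Type*} [Fintype V] [DecidableEq V] (G : SimpleGraph V)
    [DecidableRel G.Adj] (k : ℕ) : Prop :=
  ∀ U : Finset V, U.card ≤ k → 2 * U.card ≤ (extNbhd G U).card

/-- The maximum length (number of edges) of a path in `G`. -/
noncomputable def maxPathLen {V : Type*} (G : SimpleGraph V) : ℕ :=
  sSup {n | ∃ (u v : V) (p : G.Walk u v), p.IsPath ∧ p.length = n}

/-- A non-edge `(u, v)` of `G` is a booster if adding it to `G` yields a graph which is
Hamiltonian or whose longest path is strictly longer than the longest path of `G`. -/
def IsBooster {V : Type*} [Fintype V] [DecidableEq V] (G : SimpleGraph V) (u v : V) : Prop :=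
  u ≠ v ∧ ¬ G.Adj u v ∧
    ((G ⊔ fromEdgeSet {s(u, v)}).IsHamiltonian ∨
      maxPathLen G < maxPathLen (G ⊔ fromEdgeSet {s(u, v)}))


section Helpers
variable {V : Type*} [Fintype V] {G : SimpleGraph V}

lemma pathLen_bdd : BddAbove {n | ∃ (u v : V) (p : G.Walk u v), p.IsPath ∧ p.length = n} := by
  refine ⟨Fintype.card V, fun n hn => ?_⟩
  obtain ⟨u, v, p, hp, rfl⟩ := hn
  exact hp.length_lt.le

lemma length_le_maxPathLen {u v : V} {p : G.Walk u v} (hp : p.IsPath) :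
    p.length ≤ maxPathLen G := le_csSup pathLen_bdd ⟨u, v, p, hp, rfl⟩

lemma exists_maxPath [Nonempty V] :
    ∃ (u v : V) (p : G.Walk u v), p.IsPath ∧ p.length = maxPathLen G := by
  have hne : {n | ∃ (u v : V) (p : G.Walk u v), p.IsPath ∧ p.length = n}.Nonempty := by
    refine ⟨0, Classical.arbitrary V, Classical.arbitrary V, Walk.nil, Walk.IsPath.nil, rfl⟩
  exact Nat.sSup_mem hne pathLen_bdd

end Helpers

section Nbr
variable {V : Type*} [Fintype V] [DecidableEq V] {G : SimpleGraph V}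

noncomputable def wnbr {a b : V} (p : G.Walk a b) (u : V) : Finset V :=
  Finset.univ.filter (fun w => s(u, w) ∈ p.edges)

lemma mem_wnbr {a b : V} {p : G.Walk a b} {u w : V} :
    w ∈ wnbr p u ↔ s(u, w) ∈ p.edges := by simp [wnbr]

lemma wnbr_start_card {a b : V} {p : G.Walk a b} (hp : p.IsPath) :
    (wnbr p a).card ≤ 1 := by
  cases p with
  | nil => simp [wnbr]
  | cons h q =>
    rename_i c
    rw [Walk.cons_isPath_iff] at hp
    have hsub : wnbr (Walk.cons h q) a ⊆ {c} := by
      intro w hw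
      rw [mem_wnbr, Walk.edges_cons, List.mem_cons] at hw
      rcases hw with hw | hw
      · rw [Sym2.eq_iff] at hw
        rcases hw with ⟨-, rfl⟩ | ⟨rfl, rfl⟩ <;> simp
      · exact absurd (Walk.fst_mem_support_of_mem_edges q hw) hp.2
    exact (Finset.card_le_card hsub).trans (by simp)

lemma wnbr_end_card {a b : V} {p : G.Walk a b} (hp : p.IsPath) :
    (wnbr p b).card ≤ 1 := by
  have : wnbr p b = wnbr p.reverse b := by
    ext w; simp [mem_wnbr, Walk.edges_reverse]
  rw [this]
  exact wnbr_start_card hp.reverse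

lemma wnbr_card_le_two {a b : V} {p : G.Walk a b} (hp : p.IsPath) (u : V) :
    (wnbr p u).card ≤ 2 := by
  induction p with
  | nil => simp [wnbr]
  | cons h q ih =>
    rename_i x c y
    rw [Walk.cons_isPath_iff] at hp
    by_cases hux : u = x
    · subst hux
      have hsub : wnbr (Walk.cons h q) u ⊆ {c} := by
        intro w hw
        rw [mem_wnbr, Walk.edges_cons, List.mem_cons] at hw
        rcases hw with hw | hw
        · rw [Sym2.eq_iff] at hw
          rcases hw with ⟨-, rfl⟩ | ⟨rfl, rfl⟩ <;> simp
        · exact absurd (Walk.fst_mem_support_of_mem_edges q hw) hp.2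
      exact (Finset.card_le_card hsub).trans (by simp)
    by_cases huc : u = c
    · subst huc
      have hsub : wnbr (Walk.cons h q) u ⊆ insert x (wnbr q u) := by
        intro w hw
        rw [mem_wnbr, Walk.edges_cons, List.mem_cons] at hw
        rcases hw with hw | hw
        · rw [Sym2.eq_iff] at hw
          rcases hw with ⟨hw1, -⟩ | ⟨-, rfl⟩
          · exact absurd hw1 hux
          · simp
        · simp [mem_wnbr, hw]
      refine (Finset.card_le_card hsub).trans ?_
      refine (Finset.card_insert_le _ _).trans ?_
      have := wnbr_start_card hp.1
      omega
    · have hsub : wnbr (Walk.cons h q) u = wnbr q u := by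
        ext w
        rw [mem_wnbr, Walk.edges_cons, List.mem_cons, mem_wnbr]
        constructor
        · rintro (hw | hw)
          · rw [Sym2.eq_iff] at hw
            rcases hw with ⟨hw1, -⟩ | ⟨hw2, -⟩
            · exact absurd hw1 hux
            · exact absurd hw2 huc
          · exact hw
        · exact fun hw => Or.inr hw
      rw [hsub]
      exact ih hp.1
end Nbr

section Cross
variable {V : Type*} {G : SimpleGraph V}

lemma crossing_of_walk {S : Set V} :
    ∀ {a b : V} (_ : G.Walk a b), a ∈ S → b ∉ S →
      ∃ u ∈ S, ∃ w, w ∉ S ∧ G.Adj u w := by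
  intro a b p
  induction p with
  | nil => intro ha hb; exact absurd ha hb
  | cons h q ih =>
    rename_i x c y
    intro ha hb
    by_cases hc : c ∈ S
    · exact ih hc hb
    · exact ⟨x, ha, c, hc, h⟩

lemma exists_crossing (hconn : G.Connected) {S : Set V} {u₀ w₀ : V}
    (hu : u₀ ∈ S) (hw : w₀ ∉ S) : ∃ u ∈ S, ∃ w, w ∉ S ∧ G.Adj u w := by
  obtain ⟨p⟩ := hconn.preconnected u₀ w₀
  exact crossing_of_walk p hu hw

/-- From a cycle at `u`, extract a path ending at `u` covering the cycle. -/
lemma cycle_exists_path {u : V} (c : G.Walk u u) (hc : c.IsCycle) :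
    ∃ (z : V) (d : G.Walk z u), d.IsPath ∧ d.length + 1 = c.length ∧
      (∀ v, v ∈ d.support ↔ v ∈ c.support) := by
  cases c with
  | nil => exact absurd rfl hc.ne_nil
  | cons h d =>
    rename_i z
    refine ⟨z, d, ?_, by simp, ?_⟩
    · rw [Walk.isPath_def]
      have := hc.2
      simpa [Walk.support_cons] using this
    · intro v
      simp only [Walk.support_cons, List.mem_cons]
      constructor
      · exact fun hv => Or.inr hv
      · rintro (rfl | hv)
        · exact d.end_mem_support
        · exact hv
end Cross

section CycleLemma
variable {V : Type*} [Fintype V] [DecidableEq V]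

lemma rotate_length {G : SimpleGraph V} {u v : V} (c : G.Walk v v) (h : u ∈ c.support) :
    (c.rotate u h).length = c.length := by
  rw [← Walk.length_edges, ← Walk.length_edges]
  exact (c.rotate_edges u h).perm.length_eq

/-- key lemma: a spanning-or-extendable cycle. -/
lemma cycle_to_long {H : SimpleGraph V} (hHconn : H.Connected) {a b : V}
    (p : H.Walk a b) (hp : p.IsPath) (hlen : 2 ≤ p.length) (hadj : H.Adj b a) :
    H.IsHamiltonian ∨
      ∃ (x y : V) (r : H.Walk x y), r.IsPath ∧ r.length = p.length + 1 := by
  have hab : a ≠ b := by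
    rintro rfl
    rw [Walk.isPath_iff_eq_nil] at hp
    subst hp
    simp at hlen
  have hedge : s(b, a) ∉ p.edges := by
    intro hmem
    obtain ⟨c0, h0, p', rfl⟩ := p.exists_eq_cons_of_ne hab
    rw [Walk.cons_isPath_iff] at hp
    rw [Walk.edges_cons, List.mem_cons] at hmem
    rcases hmem with hmem | hmem
    · rw [Sym2.eq_iff] at hmem
      rcases hmem with ⟨hba, -⟩ | ⟨rfl, -⟩
      · exact absurd hba.symm hab
      · have : p' = Walk.nil := Walk.isPath_iff_eq_nil.mp hp.1
        subst this
        simp at hlen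
    · exact hp.2 (Walk.snd_mem_support_of_mem_edges p' hmem)
  have hc : (Walk.cons hadj p).IsCycle := (Walk.cons_isCycle_iff p hadj).mpr ⟨hp, hedge⟩
  set c : H.Walk b b := Walk.cons hadj p with hcdef
  by_cases hspan : ∀ v, v ∈ c.support
  · left
    intro _
    refine ⟨b, c, ?_⟩
    rw [Walk.isHamiltonianCycle_iff_isCycle_and_support_count_tail_eq_one]
    refine ⟨hc, ?_⟩
    have hsupp : c.support.tail = p.support := by simp [hcdef]
    rw [hsupp]
    have hmem : ∀ w, w ∈ p.support := by
      intro w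
      have := hspan w
      rw [hcdef, Walk.support_cons, List.mem_cons] at this
      rcases this with rfl | h
      · exact p.end_mem_support
      · exact h
    exact hp.isHamiltonian_of_mem hmem
  · right
    push_neg at hspan
    obtain ⟨w₀, hw₀⟩ := hspan
    obtain ⟨u, hu, w, hw, huw⟩ :=
      exists_crossing hHconn (S := {v | v ∈ c.support}) (u₀ := b) (w₀ := w₀)
        c.start_mem_support hw₀
    have hu' : u ∈ c.support := hu
    set c' := c.rotate u hu' with hc'def
    have hc' : c'.IsCycle := hc.rotate hu'
    have hlenc' : c'.length = c.length := rotate_length c hu'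
    have hsupc' : ∀ v, v ∈ c'.support → v ∈ c.support := by
      intro v hv
      rw [Walk.support_eq_cons, List.mem_cons] at hv
      rcases hv with rfl | hv
      · exact hu'
      · have := (Walk.support_rotate c u hu').mem_iff.mp hv
        exact List.mem_of_mem_tail this
    obtain ⟨z, d, hd, hdl, hdsupp⟩ := cycle_exists_path c' hc'
    have hwd : w ∉ d.support := by
      intro hmem
      exact hw (hsupc' w ((hdsupp w).mp hmem))
    refine ⟨z, w, d.concat huw, ?_, ?_⟩
    · rw [Walk.isPath_def, Walk.support_concat]
      rw [Walk.isPath_def] at hd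
      simp [List.concat_eq_append, List.nodup_append, hd, hwd]
      intro x hx hxw; exact hwd (hxw ▸ hx)
    · rw [Walk.length_concat]
      have : c.length = p.length + 1 := by simp [hcdef]
      omega
end CycleLemma

section Booster
variable {V : Type*} [Fintype V] [DecidableEq V] {G : SimpleGraph V}

lemma booster_of_maxpath (hconn : G.Connected) (hham : ¬ G.IsHamiltonian)
    (hlen2 : 2 ≤ maxPathLen G) {a b : V} (p : G.Walk a b) (hp : p.IsPath)
    (hl : p.length = maxPathLen G) : IsBooster G a b := by
  have hab : a ≠ b := by
    rintro rfl
    rw [Walk.isPath_iff_eq_nil] at hp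
    subst hp
    simp at hl
    omega
  have hlp : 2 ≤ p.length := by omega
  have hnadj : ¬ G.Adj a b := by
    intro hadj
    rcases cycle_to_long hconn p hp hlp hadj.symm with hH | ⟨x, y, r, hr, hrl⟩
    · exact hham hH
    · have := length_le_maxPathLen hr
      omega
  refine ⟨hab, hnadj, ?_⟩
  set H : SimpleGraph V := G ⊔ fromEdgeSet {s(a, b)} with hHdef
  have hGH : G ≤ H := le_sup_left
  have hHconn : H.Connected := hconn.mono hGH
  have hHadj : H.Adj b a := by
    refine Or.inr ?_
    rw [fromEdgeSet_adj]
    exact ⟨by rw [Sym2.eq_swap]; exact Set.mem_singleton _, hab.symm⟩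
  set p' : H.Walk a b := p.mapLe hGH with hp'def
  have hp' : p'.IsPath := hp.mapLe hGH
  have hp'l : p'.length = p.length := by simp [hp'def, Walk.mapLe]
  rcases cycle_to_long hHconn p' hp' (by omega) hHadj with hH | ⟨x, y, r, hr, hrl⟩
  · exact Or.inl hH
  · refine Or.inr ?_
    have h1 : r.length ≤ maxPathLen H := length_le_maxPathLen hr
    omega
end Booster

/-- Pósa rotations with fixed initial vertex `v₀`, starting from path `P`. -/
inductive Rot {V : Type*} {G : SimpleGraph V} {v₀ t₀ : V} (P : G.Walk v₀ t₀) :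
    ∀ {x : V}, G.Walk v₀ x → Prop
  | base : Rot P P
  | step {x y z : V} (q₁ : G.Walk v₀ y) (h : G.Adj y z) (q₂ : G.Walk z x) (hxy : G.Adj x y)
      (hq : Rot P (q₁.append (Walk.cons h q₂))) :
      Rot P (q₁.append (Walk.cons hxy.symm q₂.reverse))

section Rotation
variable {V : Type*} {G : SimpleGraph V} {v₀ t₀ : V} {P : G.Walk v₀ t₀}

lemma rot_support {x : V} {q : G.Walk v₀ x} (hq : Rot P q) :
    q.support.Perm P.support := by
  induction hq with
  | base => exact List.Perm.refl _
  | step q₁ h q₂ hxy hq ih =>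
    have e1 : (q₁.append (Walk.cons hxy.symm q₂.reverse)).support
        = q₁.support ++ q₂.support.reverse := by
      rw [Walk.support_append]; simp [Walk.support_reverse]
    have e2 : (q₁.append (Walk.cons h q₂)).support = q₁.support ++ q₂.support := by
      rw [Walk.support_append]; simp
    rw [e2] at ih
    rw [e1]
    exact ((q₂.support.reverse_perm).append_left q₁.support).trans ih

lemma rot_length {x : V} {q : G.Walk v₀ x} (hq : Rot P q) : q.length = P.length := by
  induction hq with
  | base => rfl
  | step q₁ h q₂ hxy hq ih =>
    rw [Walk.length_append, Walk.length_cons] at ih ⊢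
    rw [Walk.length_reverse]
    omega

lemma rot_isPath (hP : P.IsPath) {x : V} {q : G.Walk v₀ x} (hq : Rot P q) : q.IsPath :=
  (Walk.isPath_def _).mpr (((rot_support hq).nodup_iff).mpr hP.support_nodup)

lemma rot_edges_at {w : V}
    (hwR : ∀ q' : G.Walk v₀ w, ¬ Rot P q')
    (hPn : ∀ u, s(w, u) ∈ P.edges → ∀ q' : G.Walk v₀ u, ¬ Rot P q')
    {x : V} {q : G.Walk v₀ x} (hq : Rot P q) :
    ∀ u, (s(w, u) ∈ q.edges ↔ s(w, u) ∈ P.edges) := by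
  induction hq with
  | base => exact fun u => Iff.rfl
  | @step x y z q₁ h q₂ hxy hq ih =>
    have hnew : Rot P (q₁.append (Walk.cons hxy.symm q₂.reverse)) :=
      Rot.step q₁ h q₂ hxy hq
    have hwx : w ≠ x := by rintro rfl; exact hwR _ hq
    have hwz : w ≠ z := by rintro rfl; exact hwR _ hnew
    have hwy : w ≠ y := by
      rintro rfl
      have hmem : s(w, z) ∈ (q₁.append (Walk.cons h q₂)).edges := by
        rw [Walk.edges_append, Walk.edges_cons]; simp
      exact hPn z ((ih z).mp hmem) _ hnew
    intro u
    have h1 : s(w, u) ≠ s(y, x) := by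
      rw [Ne, Sym2.eq_iff]
      rintro (⟨hwy', -⟩ | ⟨hwx', -⟩)
      exacts [hwy hwy', hwx hwx']
    have h2 : s(w, u) ≠ s(y, z) := by
      rw [Ne, Sym2.eq_iff]
      rintro (⟨hwy', -⟩ | ⟨hwz', -⟩)
      exacts [hwy hwy', hwz hwz']
    have ihu := ih u
    rw [Walk.edges_append, Walk.edges_cons, List.mem_append, List.mem_cons] at ihu
    rw [Walk.edges_append, Walk.edges_cons, Walk.edges_reverse, List.mem_append,
      List.mem_cons, List.mem_reverse]
    constructor
    · rintro (hm | hm | hm)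
      · exact ihu.mp (Or.inl hm)
      · exact absurd hm h1
      · exact ihu.mp (Or.inr (Or.inr hm))
    · intro hm
      rcases ihu.mpr hm with h' | h' | h'
      · exact Or.inl h'
      · exact absurd h' h2
      · exact Or.inr (Or.inr h')

lemma concat_path {a b w : V} {q : G.Walk a b} (hq : q.IsPath) (hw : w ∉ q.support)
    (h : G.Adj b w) : (q.concat h).IsPath := by
  rw [Walk.isPath_def, Walk.support_concat]
  rw [Walk.isPath_def] at hq
  simp [List.concat_eq_append, List.nodup_append, hq, hw]
  intro x hx hxw; exact hw (hxw ▸ hx)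

end Rotation

section Posa
variable {V : Type*} [Fintype V] [DecidableEq V] {G : SimpleGraph V} [DecidableRel G.Adj]

lemma posa {k : ℕ} (hexp : IsKExpander G k) {v₀ t₀ : V} (P : G.Walk v₀ t₀)
    (hP : P.IsPath) (hPl : P.length = maxPathLen G) :
    ∃ F : Finset V, k + 1 ≤ F.card ∧
      ∀ x ∈ F, ∃ q : G.Walk v₀ x, q.IsPath ∧ q.length = maxPathLen G := by
  classical
  let R : Finset V := Finset.univ.filter (fun x => ∃ q : G.Walk v₀ x, Rot P q)
  have hmemR : ∀ x : V, x ∈ R ↔ ∃ q : G.Walk v₀ x, Rot P q := by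
    intro x; simp [R]
  have htR : t₀ ∈ R := (hmemR t₀).mpr ⟨P, Rot.base⟩
  refine ⟨R, ?_, ?_⟩
  swap
  · intro x hx
    obtain ⟨q, hq⟩ := (hmemR x).mp hx
    exact ⟨q, rot_isPath hP hq, (rot_length hq).trans hPl⟩
  by_contra hcard
  push_neg at hcard
  have hRk : R.card ≤ k := by omega
  have hsub : extNbhd G R ⊆ R.biUnion (fun u => wnbr P u) := by
    intro w hw
    rw [extNbhd, Finset.mem_filter] at hw
    obtain ⟨-, hwR, u, huR, hadj⟩ := hw
    by_contra hwD
    rw [Finset.mem_biUnion] at hwD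
    push_neg at hwD
    have hwR' : ∀ q' : G.Walk v₀ w, ¬ Rot P q' := by
      intro q' hq'; exact hwR ((hmemR w).mpr ⟨q', hq'⟩)
    have hPn : ∀ u', s(w, u') ∈ P.edges → ∀ q' : G.Walk v₀ u', ¬ Rot P q' := by
      intro u' hmem q' hq'
      have hu'R : u' ∈ R := (hmemR u').mpr ⟨q', hq'⟩
      apply hwD u' hu'R
      rw [mem_wnbr, Sym2.eq_swap]
      exact hmem
    obtain ⟨q, hq⟩ := (hmemR u).mp huR
    have hqpath := rot_isPath hP hq
    have hqlen : q.length = maxPathLen G := (rot_length hq).trans hPl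
    have hwsup : w ∈ q.support := by
      by_contra hns
      have hp2 : (q.concat hadj).IsPath := concat_path hqpath hns hadj
      have := length_le_maxPathLen hp2
      rw [Walk.length_concat] at this
      omega
    have hwu : w ≠ u := by rintro rfl; exact hwR huR
    have hspec : (q.takeUntil w hwsup).append (q.dropUntil w hwsup) = q :=
      q.take_spec hwsup
    obtain ⟨z, hz, q₂', hq₂eq⟩ := Walk.exists_eq_cons_of_ne hwu (q.dropUntil w hwsup)
    have hq' : Rot P ((q.takeUntil w hwsup).append (Walk.cons hz q₂')) := by
      rw [← hq₂eq, hspec]; exact hq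
    have hnew : Rot P ((q.takeUntil w hwsup).append (Walk.cons hadj.symm q₂'.reverse)) :=
      Rot.step _ hz q₂' hadj hq'
    have hedge : s(w, z) ∈ q.edges := by
      rw [← hspec, hq₂eq, Walk.edges_append, Walk.edges_cons]
      simp
    have hPedge : s(w, z) ∈ P.edges := (rot_edges_at hwR' hPn hq z).mp hedge
    exact hPn z hPedge _ hnew
  have hbi := Finset.card_biUnion_le (s := R) (t := fun u => wnbr P u)
  have hsum : ∑ u ∈ R, (wnbr P u).card ≤ 2 * R.card - 1 := by
    have he : ∑ x ∈ R.erase t₀, (wnbr P x).card + (wnbr P t₀).card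
        = ∑ x ∈ R, (wnbr P x).card := Finset.sum_erase_add R _ htR
    have h1 : (wnbr P t₀).card ≤ 1 := wnbr_end_card hP
    have h2 : ∑ x ∈ R.erase t₀, (wnbr P x).card ≤ (R.erase t₀).card * 2 := by
      have := Finset.sum_le_card_nsmul (R.erase t₀) (fun x => (wnbr P x).card) 2
        (fun x _ => wnbr_card_le_two hP x)
      simpa [smul_eq_mul] using this
    have h3 : (R.erase t₀).card = R.card - 1 := Finset.card_erase_of_mem htR
    have hR1 : 1 ≤ R.card := Finset.card_pos.mpr ⟨t₀, htR⟩
    omega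
  have hN := hexp R hRk
  have hle := Finset.card_le_card hsub
  have hR1 : 1 ≤ R.card := Finset.card_pos.mpr ⟨t₀, htR⟩
  omega
end Posa

section Final
variable {V : Type*} [Fintype V] [DecidableEq V] {G : SimpleGraph V} [DecidableRel G.Adj]

lemma two_le_maxPathLen [Nonempty V] {k : ℕ} (hexp : IsKExpander G k) (hk : 0 < k) :
    2 ≤ maxPathLen G := by
  obtain ⟨v⟩ := ‹Nonempty V›
  have h1 : ({v} : Finset V).card ≤ k := by simp; omega
  have h2 := hexp {v} h1
  rw [Finset.card_singleton, mul_one] at h2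
  obtain ⟨a, ha, b, hb, hab⟩ := Finset.one_lt_card.mp (show 1 < (extNbhd G {v}).card by omega)
  simp only [extNbhd, Finset.mem_filter] at ha hb
  obtain ⟨-, hav, u₁, hu₁, hadj₁⟩ := ha
  obtain ⟨-, hbv, u₂, hu₂, hadj₂⟩ := hb
  rw [Finset.mem_singleton] at hu₁ hu₂ hav hbv
  have hva : G.Adj v a := hu₁ ▸ hadj₁
  have hvb : G.Adj v b := hu₂ ▸ hadj₂
  let w : G.Walk a b := Walk.cons hva.symm (Walk.cons hvb Walk.nil)
  have hw : w.IsPath := by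
    rw [Walk.cons_isPath_iff]
    constructor
    · rw [Walk.cons_isPath_iff]
      simp [hvb.ne]
    · simp [Walk.support_cons]
      exact ⟨fun h => hav h, hab⟩
  have : w.length = 2 := by simp [w]
  have := length_le_maxPathLen hw
  omega

theorem main_count {k : ℕ} (hk : 0 < k)
    (hconn : G.Connected) (hham : ¬ G.IsHamiltonian) (hexp : IsKExpander G k) :
    ((k + 1 : ℝ) ^ 2) / 2 ≤
      ({e : Sym2 V | ∃ u v : V, e = s(u, v) ∧ IsBooster G u v}.ncard : ℝ) := by
  classical
  have hne : Nonempty V := hconn.nonempty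
  have hlen2 := two_le_maxPathLen hexp hk
  obtain ⟨a₀, b₀, P₀, hP₀, hP₀l⟩ := exists_maxPath (G := G)
  obtain ⟨F₁, hF₁card, hF₁⟩ := posa hexp P₀.reverse hP₀.reverse
    (by rw [Walk.length_reverse]; exact hP₀l)
  have hstage2 : ∀ x ∈ F₁, ∃ F₂ : Finset V, k + 1 ≤ F₂.card ∧
      ∀ y ∈ F₂, IsBooster G x y := by
    intro x hx
    obtain ⟨q, hq, hql⟩ := hF₁ x hx
    obtain ⟨F₂, hc, hmem⟩ := posa hexp q.reverse hq.reverse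
      (by rw [Walk.length_reverse]; exact hql)
    refine ⟨F₂, hc, fun y hy => ?_⟩
    obtain ⟨r, hr, hrl⟩ := hmem y hy
    exact booster_of_maxpath hconn hham hlen2 r hr hrl
  choose F₂ hF₂card hF₂ using hstage2
  let Pairs : Finset (V × V) :=
    F₁.attach.biUnion (fun x => (F₂ x.1 x.2).image (fun y => (x.1, y)))
  have hdisj : ∀ x ∈ F₁.attach, ∀ x' ∈ F₁.attach, x ≠ x' →
      Disjoint ((F₂ x.1 x.2).image (fun y => (x.1, y)))
        ((F₂ x'.1 x'.2).image (fun y => (x'.1, y))) := by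
    rintro x - x' - hxx'
    rw [Finset.disjoint_left]
    rintro ⟨u, v⟩ h1 h2
    simp only [Finset.mem_image, Prod.mk.injEq] at h1 h2
    obtain ⟨y, -, rfl, -⟩ := h1
    obtain ⟨y', -, h, -⟩ := h2
    exact hxx' (Subtype.ext h.symm)
  have hPairscard : (k + 1) * (k + 1) ≤ Pairs.card := by
    rw [Finset.card_biUnion hdisj]
    have hbound : ∀ x ∈ F₁.attach,
        k + 1 ≤ ((F₂ x.1 x.2).image (fun y => (x.1, y))).card := by
      rintro x -
      rw [Finset.card_image_of_injective _ (fun y₁ y₂ h => (Prod.mk.injEq _ _ _ _ ▸ h : _ ∧ _).2)]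
      exact hF₂card x.1 x.2
    have := Finset.card_nsmul_le_sum F₁.attach
      (fun x => ((F₂ x.1 x.2).image (fun y => (x.1, y))).card) (k + 1) hbound
    rw [Finset.card_attach, smul_eq_mul] at this
    calc (k + 1) * (k + 1) ≤ F₁.card * (k + 1) := by
          exact Nat.mul_le_mul_right _ hF₁card
      _ ≤ _ := this
  have hPboost : ∀ p ∈ Pairs, IsBooster G p.1 p.2 := by
    intro p hp
    simp only [Pairs, Finset.mem_biUnion, Finset.mem_attach, Finset.mem_image, true_and] at hp
    obtain ⟨x, y, hy, rfl⟩ := hp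
    exact hF₂ x.1 x.2 y hy
  let T := Pairs.image (fun p => s(p.1, p.2))
  have hfib : Pairs.card ≤ 2 * T.card := by
    refine Finset.card_le_mul_card_image Pairs 2 ?_
    intro b hb
    rw [Finset.mem_image] at hb
    obtain ⟨⟨u, v⟩, -, rfl⟩ := hb
    have hsub2 : {a ∈ Pairs | s(a.1, a.2) = s(u, v)} ⊆ {(u, v), (v, u)} := by
      rintro ⟨u', v'⟩ ha
      rw [Finset.mem_filter] at ha
      have := ha.2
      rw [Sym2.eq_iff] at this
      rcases this with ⟨rfl, rfl⟩ | ⟨rfl, rfl⟩ <;> simp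
    refine (Finset.card_le_card hsub2).trans ?_
    exact (Finset.card_insert_le _ _).trans (by simp)
  set B : Set (Sym2 V) := {e : Sym2 V | ∃ u v : V, e = s(u, v) ∧ IsBooster G u v} with hBdef
  have hsubB : (↑T : Set (Sym2 V)) ⊆ B := by
    intro e he
    rw [Finset.coe_image] at he
    obtain ⟨p, hp, rfl⟩ := he
    exact ⟨p.1, p.2, rfl, hPboost p hp⟩
  have hTcard : T.card ≤ B.ncard := by
    rw [← Set.ncard_coe_finset]
    exact Set.ncard_le_ncard hsubB (Set.toFinite _)
  have hfinal : (k + 1) * (k + 1) ≤ 2 * B.ncard := by omega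
  have hcast : ((k + 1 : ℕ) : ℝ) * ((k + 1 : ℕ) : ℝ) ≤ 2 * (B.ncard : ℝ) := by
    exact_mod_cast hfinal
  rw [div_le_iff₀ (by norm_num : (0 : ℝ) < 2)]
  push_cast at hcast ⊢
  nlinarith [hcast]
end Final

theorem stmt0 {V : Type*} [Fintype V] [DecidableEq V] (G : SimpleGraph V)
    [DecidableRel G.Adj] (k : ℕ) (hk : 0 < k)
    (hconn : G.Connected) (hham : ¬ G.IsHamiltonian) (hexp : IsKExpander G k) :
    ((k + 1 : ℝ) ^ 2) / 2 ≤
      ({e : Sym2 V | ∃ u v : V, e = s(u, v) ∧ IsBooster G u v}.ncard : ℝ) :=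
  main_count hk hconn hham hexp
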